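/- Let the top category of a resolvent pair be finite-dimensional modules over a k-algebra A, with k algebraically closed. Every object V admits a relatively projective cover (R_V, p_V) — a relatively projective object with a relatively essential allowable epimorphism p_V : R_V → V — and it is unique up to isomorphism. -/

import Mathlib

open CategoryTheory CategoryTheory.Limits

universe v u v' u'

/-- A resolvent pair of abelian categories: an adjunction `F ⊣ U` where the right adjoint
`U : A ⥤ B` is additive, exact and faithful. -/
structure ResolventPair (A : Type u) [Category.{v} A] [Abelian A]
    (B : Type u') [Category.{v'} B] [Abelian B] where
  /-- the left adjoint (e.g. induction) -/
  F : B ⥤ A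
  /-- the right adjoint (e.g. restriction), assumed additive, exact and faithful -/
  U : A ⥤ B
  adj : F ⊣ U
  additive : U.Additive
  preservesFiniteLimits : PreservesFiniteLimits U
  preservesFiniteColimits : PreservesFiniteColimits U
  faithful : U.Faithful

namespace ResolventPair

variable {A : Type u} [Category.{v} A] [Abelian A]
  {B : Type u'} [Category.{v'} B] [Abelian B]

/-- A morphism `f` of `A` is allowable if `U f` admits a quasi-inverse `s`,
i.e. `U f ∘ s ∘ U f = U f`. -/
def Allowable (R : ResolventPair A B) {V W : A} (f : V ⟶ W) : Prop :=
  ∃ s : R.U.obj W ⟶ R.U.obj V, R.U.map f ≫ s ≫ R.U.map f = R.U.map f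

/-- An object `P` of `A` is relatively projective if every lifting problem against an
allowable epimorphism can be solved. -/
def RelProjective (R : ResolventPair A B) (P : A) : Prop :=
  ∀ ⦃V W : A⦄ (f : V ⟶ W), Epi f → R.Allowable f →
    ∀ g : P ⟶ W, ∃ h : P ⟶ V, h ≫ f = g

end ResolventPair

open ModuleCat

variable {k : Type u} [Field k] {Aa : Type u} [Ring Aa] [Algebra k Aa]
  {B : Type u'} [Category.{v'} B] [Abelian B]

/-- The inclusion of a submodule, as a morphism in `ModuleCat`. -/
def inclusionHom (P : ModuleCat.{u} Aa) (S : Submodule Aa P) :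
    ModuleCat.of Aa S ⟶ P :=
  ModuleCat.ofHom S.subtype

/-- An allowable epimorphism `π : M → V` is relatively essential if every submodule `S ⊆ M`
on which `π` restricts to an allowable epimorphism equals `M`. -/
def RelEssential (R : ResolventPair (ModuleCat.{u} Aa) B)
    {M V : ModuleCat.{u} Aa} (π : M ⟶ V) : Prop :=
  ∀ S : Submodule Aa M, Epi (inclusionHom M S ≫ π) →
    R.Allowable (inclusionHom M S ≫ π) → S = ⊤

/-- A relatively projective cover of `V` is a relatively projective object together with a
relatively essential allowable epimorphism onto `V`. -/
def IsRelProjCover (R : ResolventPair (ModuleCat.{u} Aa) B)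
    {Rv V : ModuleCat.{u} Aa} (p : Rv ⟶ V) : Prop :=
  R.RelProjective Rv ∧ Epi p ∧ R.Allowable p ∧ RelEssential R p

/-! ### Auxiliary lemmas (general categorical part) -/

namespace ResolventPair

variable {A : Type u_gen} [Category.{v_gen} A] [Abelian A]
  {BB : Type u'} [Category.{v'} BB] [Abelian BB] (R : ResolventPair A BB)

/-- For an allowable epimorphism, the quasi-inverse is an honest section after applying `U`. -/
lemma exists_section {V W : A} (f : V ⟶ W) (hf : Epi f) (hA : R.Allowable f) :
    ∃ s : R.U.obj W ⟶ R.U.obj V, s ≫ R.U.map f = 𝟙 _ := by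
  obtain ⟨s, hs⟩ := hA
  haveI := R.preservesFiniteColimits
  haveI := hf
  haveI : Epi (R.U.map f) := inferInstance
  refine ⟨s, (cancel_epi (R.U.map f)).1 ?_⟩
  simpa using hs

lemma allowable_of_section {V W : A} (f : V ⟶ W) (s : R.U.obj W ⟶ R.U.obj V)
    (h : s ≫ R.U.map f = 𝟙 _) : R.Allowable f :=
  ⟨s, by rw [h, Category.comp_id]⟩

/-- If `a ≫ q` is an allowable epimorphism, so is `q`. -/
lemma epi_allowable_of_comp {M N V : A} (a : M ⟶ N) (q : N ⟶ V)
    (hE : Epi (a ≫ q)) (hA : R.Allowable (a ≫ q)) : Epi q ∧ R.Allowable q := by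
  obtain ⟨s, hs⟩ := R.exists_section _ hE hA
  haveI := hE
  refine ⟨epi_of_epi a q, R.allowable_of_section q (s ≫ R.U.map a) ?_⟩
  rw [Category.assoc, ← Functor.map_comp]
  exact hs

/-- Objects in the image of `F` are relatively projective. -/
lemma relProjective_F (X : BB) : R.RelProjective (R.F.obj X) := by
  intro V W f hf hA g
  obtain ⟨s, hs⟩ := R.exists_section f hf hA
  refine ⟨(R.adj.homEquiv X V).symm ((R.adj.homEquiv X W) g ≫ s), ?_⟩
  apply (R.adj.homEquiv X W).injective
  rw [Adjunction.homEquiv_naturality_right, Equiv.apply_symm_apply, Category.assoc, hs,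
    Category.comp_id]

/-- A retract of a relatively projective object is relatively projective. -/
lemma relProjective_of_retract {P Q : A} (i : P ⟶ Q) (r : Q ⟶ P) (hir : i ≫ r = 𝟙 P)
    (hQ : R.RelProjective Q) : R.RelProjective P := by
  intro V W f hf hA g
  obtain ⟨h, hh⟩ := hQ f hf hA (r ≫ g)
  exact ⟨i ≫ h, by rw [Category.assoc, hh, ← Category.assoc, hir, Category.id_comp]⟩

/-- The counit of the adjunction is an allowable epimorphism. -/
lemma counit_epi_allowable (V : A) :
    Epi (R.adj.counit.app V) ∧ R.Allowable (R.adj.counit.app V) := by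
  have htri := R.adj.right_triangle_components V
  have hA := R.allowable_of_section _ (R.adj.unit.app (R.U.obj V)) htri
  haveI := R.faithful
  haveI : IsSplitEpi (R.U.map (R.adj.counit.app V)) :=
    IsSplitEpi.mk' ⟨R.adj.unit.app _, htri⟩
  exact ⟨R.U.epi_of_epi_map inferInstance, hA⟩

end ResolventPair

/-! ### Auxiliary lemmas (module-theoretic part) -/

/-- A surjective endomorphism of a finite-dimensional module is injective. -/
lemma inj_of_surj_endo (k : Type u) [Field k] {Aa : Type u} [Ring Aa] [Algebra k Aa]
    (M : ModuleCat.{u} Aa) [FiniteDimensional k M] (e : M ⟶ M)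
    (h : Function.Surjective e) : Function.Injective e :=
  (LinearMap.injective_iff_surjective (f := LinearMap.restrictScalars k e.hom)).2 h

lemma isIso_of_surj_endo (k : Type u) [Field k] {Aa : Type u} [Ring Aa] [Algebra k Aa]
    (M : ModuleCat.{u} Aa) [FiniteDimensional k M] (e : M ⟶ M)
    (h : Function.Surjective e) : IsIso e := by
  haveI : Mono e := (ModuleCat.mono_iff_injective e).2 (inj_of_surj_endo k M e h)
  haveI : Epi e := (ModuleCat.epi_iff_surjective e).2 h
  exact isIso_of_mono_of_epi e

/-- A submodule of a finite-dimensional module is finite-dimensional. -/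
lemma fd_of_submodule (k : Type u) [Field k] {Aa : Type u} [Ring Aa] [Algebra k Aa]
    (M : ModuleCat.{u} Aa) [FiniteDimensional k M] (S : Submodule Aa M) :
    FiniteDimensional k (ModuleCat.of Aa S) :=
  Module.Finite.equiv
    ({ toFun := fun x => ⟨x.1, x.2⟩, invFun := fun x => ⟨x.1, x.2⟩,
       map_add' := fun _ _ => rfl, map_smul' := fun _ _ => rfl,
       left_inv := fun _ => rfl, right_inv := fun _ => rfl } :
      ↥(Submodule.restrictScalars k S) ≃ₗ[k] (ModuleCat.of Aa S))

/-- If `t ≫ p` is an allowable epimorphism and `p` is relatively essential, `t` is surjective. -/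
lemma surj_of_essential (R : ResolventPair (ModuleCat.{u} Aa) B)
    {M V N : ModuleCat.{u} Aa} {p : M ⟶ V} (hp : RelEssential R p)
    (t : N ⟶ M) (hE : Epi (t ≫ p)) (hA : R.Allowable (t ≫ p)) : Function.Surjective t := by
  have hfac : (ModuleCat.ofHom (LinearMap.rangeRestrict t.hom) :
      N ⟶ ModuleCat.of Aa (LinearMap.range t.hom)) ≫
      (inclusionHom M (LinearMap.range t.hom) ≫ p) = t ≫ p := by
    apply ModuleCat.hom_ext; apply LinearMap.ext; intro x; rfl
  rw [← hfac] at hE hA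
  obtain ⟨h1, h2⟩ := R.epi_allowable_of_comp _ _ hE hA
  exact LinearMap.range_eq_top.1 (hp _ h1 h2)

/-- Existence of a relatively projective cover, given a finite-dimensional relatively
projective allowable epimorphism onto `V`. -/
lemma exists_cover_aux [IsAlgClosed k] (R : ResolventPair (ModuleCat.{u} Aa) B)
    {V M₀ : ModuleCat.{u} Aa} [FiniteDimensional k M₀] (hM₀proj : R.RelProjective M₀)
    (ε : M₀ ⟶ V) (hεepi : Epi ε) (hεallow : R.Allowable ε) :
    ∃ (Rv : ModuleCat.{u} Aa) (p : Rv ⟶ V), IsRelProjCover R p := by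
  classical
  set 𝒮 : Set (Submodule Aa M₀) :=
    {S | Epi (inclusionHom M₀ S ≫ ε) ∧ R.Allowable (inclusionHom M₀ S ≫ ε)} with h𝒮
  set rk : Submodule Aa M₀ → ℕ :=
    fun S => Module.finrank k ↥(Submodule.restrictScalars k S) with hrk
  -- ⊤ belongs to 𝒮
  have htopfac : (ModuleCat.ofHom (Submodule.topEquiv (R := Aa) (M := M₀)).symm.toLinearMap :
      M₀ ⟶ ModuleCat.of Aa (⊤ : Submodule Aa M₀)) ≫
      (inclusionHom M₀ ⊤ ≫ ε) = ε := by
    apply ModuleCat.hom_ext; apply LinearMap.ext; intro x; rfl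
  have htop : (⊤ : Submodule Aa M₀) ∈ 𝒮 :=
    R.epi_allowable_of_comp _ _ (by rw [htopfac]; exact hεepi) (by rw [htopfac]; exact hεallow)
  -- pick a minimal element
  obtain ⟨S, hS𝒮, hSrk⟩ := Nat.sInf_mem (s := rk '' 𝒮) ⟨rk ⊤, ⟨⊤, htop, rfl⟩⟩
  obtain ⟨hSepi, hSallow⟩ := hS𝒮
  -- essentiality
  have hess : RelEssential R (inclusionHom M₀ S ≫ ε) := by
    intro T' hT'epi hT'allow
    have hinj : Function.Injective (S.subtype) := S.injective_subtype
    have hfac : (ModuleCat.ofHom (Submodule.equivMapOfInjective S.subtype hinj T').toLinearMap :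
        ModuleCat.of Aa T' ⟶ ModuleCat.of Aa (T'.map S.subtype)) ≫
        (inclusionHom M₀ (T'.map S.subtype) ≫ ε) =
        inclusionHom (ModuleCat.of Aa S) T' ≫ (inclusionHom M₀ S ≫ ε) := by
      apply ModuleCat.hom_ext; apply LinearMap.ext; intro x
      exact congrArg ε (Submodule.coe_equivMapOfInjective_apply S.subtype hinj T' x)
    rw [← hfac] at hT'epi hT'allow
    obtain ⟨hTepi, hTallow⟩ := R.epi_allowable_of_comp _ _ hT'epi hT'allow
    have hT𝒮 : T'.map S.subtype ∈ 𝒮 := ⟨hTepi, hTallow⟩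
    have hle : T'.map S.subtype ≤ S := Submodule.map_subtype_le S T'
    have hrkle : rk S ≤ rk (T'.map S.subtype) := by
      rw [hSrk]; exact Nat.sInf_le ⟨T'.map S.subtype, hT𝒮, rfl⟩
    have heq : Submodule.restrictScalars k (T'.map S.subtype) = Submodule.restrictScalars k S :=
      Submodule.eq_of_le_of_finrank_le (fun x hx => hle hx) hrkle
    have hTS : T'.map S.subtype = S := Submodule.restrictScalars_injective k Aa M₀ heq
    apply Submodule.map_injective_of_injective hinj
    rw [Submodule.map_subtype_top]
    exact hTS
  -- relative projectivity via a retract argument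
  obtain ⟨f, hf⟩ := hM₀proj (inclusionHom M₀ S ≫ ε) hSepi hSallow ε
  have he : (inclusionHom M₀ S ≫ f) ≫ (inclusionHom M₀ S ≫ ε) = inclusionHom M₀ S ≫ ε := by
    rw [Category.assoc, hf]
  have hesurj : Function.Surjective (inclusionHom M₀ S ≫ f) :=
    surj_of_essential R hess _ (by rw [he]; exact hSepi) (by rw [he]; exact hSallow)
  haveI : FiniteDimensional k (ModuleCat.of Aa S) := fd_of_submodule k M₀ S
  haveI : IsIso (inclusionHom M₀ S ≫ f) := isIso_of_surj_endo k _ _ hesurj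
  have hproj : R.RelProjective (ModuleCat.of Aa S) :=
    R.relProjective_of_retract (inclusionHom M₀ S) (f ≫ inv (inclusionHom M₀ S ≫ f))
      (by rw [← Category.assoc]; exact IsIso.hom_inv_id _) hM₀proj
  exact ⟨ModuleCat.of Aa S, inclusionHom M₀ S ≫ ε, hproj, hSepi, hSallow, hess⟩

/-- Let the top category of a resolvent pair be the category of (finite-dimensional) modules
over a `k`-algebra, `k` algebraically closed.  Every (finite-dimensional) module `V` admits a
relatively projective cover `(R_V, p_V)`, and it is unique up to isomorphism. -/
theorem relProjCover_exists_unique [IsAlgClosed k]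
    (R : ResolventPair (ModuleCat.{u} Aa) B)
    (hFU : ∀ M : ModuleCat.{u} Aa,
      FiniteDimensional k M → FiniteDimensional k (R.F.obj (R.U.obj M)))
    (V : ModuleCat.{u} Aa) (hV : FiniteDimensional k V) :
    (∃ (Rv : ModuleCat.{u} Aa) (p : Rv ⟶ V), IsRelProjCover R p) ∧
      ∀ (Rv Rv' : ModuleCat.{u} Aa) (p : Rv ⟶ V) (p' : Rv' ⟶ V),
        FiniteDimensional k Rv → FiniteDimensional k Rv' →
        IsRelProjCover R p → IsRelProjCover R p' →
        ∃ e : Rv ≅ Rv', e.hom ≫ p' = p := by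
  constructor
  · haveI : FiniteDimensional k (R.F.obj (R.U.obj V)) := hFU V hV
    obtain ⟨hεepi, hεallow⟩ := R.counit_epi_allowable V
    exact exists_cover_aux (k := k) R (R.relProjective_F (R.U.obj V)) (R.adj.counit.app V) hεepi hεallow
  · rintro Rv Rv' p p' hfd hfd' ⟨hproj, hpepi, hpallow, hpess⟩ ⟨hproj', hpepi', hpallow', hpess'⟩
    obtain ⟨h, hh⟩ := hproj p' hpepi' hpallow' p
    obtain ⟨h', hh'⟩ := hproj' p hpepi hpallow p'
    have hsurj : Function.Surjective h :=
      surj_of_essential R hpess' h (by rw [hh]; exact hpepi) (by rw [hh]; exact hpallow)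
    have hsurj' : Function.Surjective h' :=
      surj_of_essential R hpess h' (by rw [hh']; exact hpepi') (by rw [hh']; exact hpallow')
    haveI := hfd
    have hcompsurj : Function.Surjective (h ≫ h') := hsurj'.comp hsurj
    have hcompinj : Function.Injective (h ≫ h') := inj_of_surj_endo k Rv (h ≫ h') hcompsurj
    have hinj : Function.Injective h := by
      intro a b hab
      exact hcompinj (show h' (h a) = h' (h b) by rw [hab])
    haveI : Mono h := (ModuleCat.mono_iff_injective h).2 hinj
    haveI : Epi h := (ModuleCat.epi_iff_surjective h).2 hsurj
    haveI : IsIso h := isIso_of_mono_of_epi h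
    exact ⟨asIso h, hh⟩
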